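/- Let L be a finite-dimensional Lie algebra with two distinct minimal ideals X and Y such that X ∩ Y = 0, C_L(X) = Y, C_L(Y) = X, and X and Y are L-equivalent via a 1-cocycle α ∈ Z¹(L,X) and an L-isomorphism φ : Y → X_α. Then U = ker(α) is a subalgebra of L satisfying L = X ∔ U = Y ∔ U (vector space direct sums), and U is a core-free maximal subalgebra; hence L is primitive of type 3. -/

import Mathlib

/-- Let `L` be a finite-dimensional Lie algebra with two distinct minimal
ideals `X` and `Y` such that `X ∩ Y = 0`, `C_L(X) = Y`, `C_L(Y) = X`, and `X`
and `Y` are `L`-equivalent via a 1-cocycle `α ∈ Z¹(L,X)` and an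
`L`-isomorphism `φ : Y → X_α`.  Then `U = ker α` is a subalgebra of `L` with
`L = X ∔ U = Y ∔ U`, and `U` is a core-free maximal subalgebra; hence `L` is
primitive of type 3. -/
theorem stmt10 {K L : Type*} [Field K] [LieRing L] [LieAlgebra K L]
    [FiniteDimensional K L]
    (X Y : LieIdeal K L) (hXY : X ≠ Y)
    (hXmin : X ≠ ⊥ ∧ ∀ C : LieIdeal K L, C ≤ X → C = ⊥ ∨ C = X)
    (hYmin : Y ≠ ⊥ ∧ ∀ C : LieIdeal K L, C ≤ Y → C = ⊥ ∨ C = Y)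
    (hinter : X ⊓ Y = ⊥)
    (hCX : {x : L | ∀ a ∈ X, ⁅x, a⁆ = 0} = (Y : Set L))
    (hCY : {x : L | ∀ b ∈ Y, ⁅x, b⁆ = 0} = (X : Set L))
    (α : L →ₗ[K] L) (hαX : ∀ x : L, α x ∈ X)
    (hαcoc : ∀ x y : L, α ⁅x, y⁆ = ⁅x, α y⁆ - ⁅y, α x⁆ + ⁅α x, α y⁆)
    (φ : L → L) (hφX : ∀ b ∈ Y, φ b ∈ X)
    (hφadd : ∀ b ∈ Y, ∀ b' ∈ Y, φ (b + b') = φ b + φ b')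
    (hφsmul : ∀ (k : K), ∀ b ∈ Y, φ (k • b) = k • φ b)
    (hφbr : ∀ b ∈ Y, ∀ b' ∈ Y, φ ⁅b, b'⁆ = ⁅φ b, φ b'⁆)
    (hφinj : ∀ b ∈ Y, φ b = 0 → b = 0)
    (hφsurj : ∀ a ∈ X, ∃ b ∈ Y, φ b = a)
    (hφequiv : ∀ (x : L), ∀ b ∈ Y, φ ⁅x, b⁆ = ⁅α x, φ b⁆ + ⁅x, φ b⁆) :
    ∃ U : LieSubalgebra K L, (U : Set L) = {x : L | α x = 0} ∧
      -- `L = X ∔ U`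
      (∀ z : L, ∃ a ∈ X, ∃ u ∈ U, z = a + u) ∧ (∀ z : L, z ∈ X → z ∈ U → z = 0) ∧
      -- `L = Y ∔ U`
      (∀ z : L, ∃ b ∈ Y, ∃ u ∈ U, z = b + u) ∧ (∀ z : L, z ∈ Y → z ∈ U → z = 0) ∧
      -- `U` is core-free
      (∀ C : LieIdeal K L, (C : Set L) ⊆ (U : Set L) → C = ⊥) ∧
      -- `U` is maximal
      (U ≠ ⊤ ∧ ∀ S : LieSubalgebra K L, U ≤ S → S = U ∨ S = ⊤) ∧
      -- `L` is primitive of type 3: `X` and `Y` are its only minimal ideals and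
      -- both are nonabelian
      (∀ J : LieIdeal K L, J ≠ ⊥ → (∀ C : LieIdeal K L, C ≤ J → C = ⊥ ∨ C = J) →
        J = X ∨ J = Y) ∧
      (∃ a ∈ X, ∃ b ∈ X, ⁅a, b⁆ ≠ 0) ∧ (∃ a ∈ Y, ∃ b ∈ Y, ⁅a, b⁆ ≠ 0) := by
  classical
  have hzero : ∀ z : L, z ∈ X → z ∈ Y → z = 0 := by
    intro z h1 h2
    have : z ∈ X ⊓ Y := ⟨h1, h2⟩
    rw [hinter] at this; exact this
  have hXYlie : ∀ a ∈ X, ∀ b ∈ Y, ⁅a, b⁆ = (0 : L) := by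
    intro a ha b hb
    have h1 : ⁅a, b⁆ ∈ X := by rw [← lie_skew]; exact X.neg_mem (X.lie_mem ha)
    exact hzero _ h1 (Y.lie_mem hb)
  have hYXlie : ∀ b ∈ Y, ∀ a ∈ X, ⁅b, a⁆ = (0 : L) := by
    intro b hb a ha
    rw [← lie_skew, hXYlie a ha b hb, neg_zero]
  have hφ0 : φ 0 = 0 := by
    have := hφadd 0 Y.zero_mem 0 Y.zero_mem
    simpa using this.symm
  have hmemY : ∀ z : L, (∀ a ∈ X, ⁅z, a⁆ = 0) → z ∈ Y := by
    intro z hz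
    exact (Set.ext_iff.mp hCX z).mp hz
  have hmemX : ∀ z : L, (∀ b ∈ Y, ⁅z, b⁆ = 0) → z ∈ X := by
    intro z hz
    exact (Set.ext_iff.mp hCY z).mp hz
  -- α restricted to X is -id
  have hαid : ∀ a ∈ X, α a = -a := by
    intro a ha
    have key : ∀ c ∈ X, ⁅α a + a, c⁆ = 0 := by
      intro c hc
      obtain ⟨b, hb, hfb⟩ := hφsurj c hc
      have h2 := hφequiv a b hb
      rw [hXYlie a ha b hb, hφ0, hfb] at h2
      rw [add_lie, ← h2]
    have hY : α a + a ∈ Y := hmemY _ key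
    have hX : α a + a ∈ X := X.add_mem (hαX a) ha
    exact eq_neg_of_add_eq_zero_left (hzero _ hX hY)
  -- X is nonabelian
  have hXexists : ∃ a ∈ X, a ≠ (0 : L) := by
    by_contra h
    push_neg at h
    exact hXmin.1 ((LieSubmodule.eq_bot_iff X).mpr h)
  have hXnonab : ∃ a ∈ X, ∃ b ∈ X, ⁅a, b⁆ ≠ (0 : L) := by
    by_contra h
    push_neg at h
    have hXY' : ∀ a ∈ X, a ∈ Y := fun a ha => hmemY a (fun c hc => h a ha c hc)
    obtain ⟨a, ha, hne⟩ := hXexists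
    exact hne (hzero a ha (hXY' a ha))
  have hYnonab : ∃ a ∈ Y, ∃ b ∈ Y, ⁅a, b⁆ ≠ (0 : L) := by
    by_contra h
    push_neg at h
    have hYX' : ∀ b ∈ Y, b ∈ X := fun b hb => hmemX b (fun c hc => h b hb c hc)
    have hYexists : ∃ b ∈ Y, b ≠ (0 : L) := by
      by_contra h'
      push_neg at h'
      exact hYmin.1 ((LieSubmodule.eq_bot_iff Y).mpr h')
    obtain ⟨b, hb, hne⟩ := hYexists
    exact hne (hzero b (hYX' b hb) hb)
  -- Y ∩ ker α = 0
  have hYU : ∀ b ∈ Y, α b = 0 → b = 0 := by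
    intro b hb hab
    -- the ideal Y ⊓ ker α
    set C : LieIdeal K L :=
      { (Y : Submodule K L) ⊓ LinearMap.ker α with
        lie_mem := by
          intro x m hm
          have hm' : m ∈ (Y : Submodule K L) ⊓ LinearMap.ker α := hm
          rw [Submodule.mem_inf, LinearMap.mem_ker] at hm'
          obtain ⟨hmY, hmk⟩ := hm'
          show ⁅x, m⁆ ∈ (Y : Submodule K L) ⊓ LinearMap.ker α
          rw [Submodule.mem_inf, LinearMap.mem_ker]
          refine ⟨Y.lie_mem hmY, ?_⟩
          rw [hαcoc x m, hmk]
          have h1 : ⁅m, α x⁆ = 0 := hYXlie m hmY (α x) (hαX x)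
          simp [h1] } with hCdef
    have hCmem : ∀ z : L, z ∈ C ↔ z ∈ Y ∧ α z = 0 := by
      intro z
      constructor
      · intro hz; exact ⟨hz.1, hz.2⟩
      · intro hz; exact ⟨hz.1, hz.2⟩
    have hCle : C ≤ Y := fun z hz => ((hCmem z).mp hz).1
    rcases hYmin.2 C hCle with h | h
    · have : b ∈ C := (hCmem b).mpr ⟨hb, hab⟩
      rw [h] at this
      exact this
    · -- α vanishes on Y: contradiction with X nonabelian
      exfalso
      obtain ⟨a, ha, a', ha', hne⟩ := hXnonab
      obtain ⟨c, hc, hfc⟩ := hφsurj a ha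
      obtain ⟨c', hc', hfc'⟩ := hφsurj a' ha'
      have hαc : α c = 0 := by
        have : c ∈ C := by rw [h]; exact hc
        exact ((hCmem c).mp this).2
      have hcc' : ⁅c, c'⁆ ∈ Y := Y.lie_mem hc'
      have h1 := hφbr c hc c' hc'
      have h2 := hφequiv c c' hc'
      rw [hαc] at h2
      simp only [zero_lie, zero_add] at h2
      rw [hfc, hfc'] at h1
      rw [hfc'] at h2
      rw [h2] at h1
      have : ⁅c, a'⁆ = 0 := hYXlie c hc a' ha'
      rw [this] at h1
      exact hne h1.symm
  -- define U = ker α as a subalgebra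
  let U : LieSubalgebra K L :=
    { carrier := {x : L | α x = 0}
      add_mem' := by intro a b ha hb; simp only [Set.mem_setOf_eq] at *; rw [map_add, ha, hb, add_zero]
      zero_mem' := by simp
      smul_mem' := by intro k a ha; simp only [Set.mem_setOf_eq] at *; rw [map_smul, ha, smul_zero]
      lie_mem' := by
        intro x y hx hy
        simp only [Set.mem_setOf_eq] at *
        rw [hαcoc x y, hx, hy]
        simp }
  have hUmem : ∀ z : L, z ∈ U ↔ α z = 0 := fun z => Iff.rfl
  -- L = X ∔ U
  have hXdec : ∀ z : L, ∃ a ∈ X, ∃ u ∈ U, z = a + u := by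
    intro z
    refine ⟨-α z, X.neg_mem (hαX z), z + α z, ?_, by abel⟩
    rw [hUmem, map_add, hαid (α z) (hαX z)]
    abel
  have hXUzero : ∀ z : L, z ∈ X → z ∈ U → z = 0 := by
    intro z hz hu
    have h1 : α z = -z := hαid z hz
    have h2 : α z = 0 := (hUmem z).mp hu
    rw [h2] at h1
    simpa using h1.symm
  -- dimension count: Y ⊔ ker α = ⊤
  have hXsup : (X : Submodule K L) ⊔ LinearMap.ker α = ⊤ := by
    rw [eq_top_iff]
    rintro z -
    obtain ⟨a, ha, u, hu, hz⟩ := hXdec z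
    exact Submodule.mem_sup.mpr ⟨a, ha, u, (hUmem u).mp hu, hz.symm⟩
  have hXinf : (X : Submodule K L) ⊓ LinearMap.ker α = ⊥ := by
    rw [eq_bot_iff]
    rintro z ⟨h1, h2⟩
    exact hXUzero z h1 ((hUmem z).mpr h2)
  have hYinf : (Y : Submodule K L) ⊓ LinearMap.ker α = ⊥ := by
    rw [eq_bot_iff]
    rintro z ⟨h1, h2⟩
    exact hYU z h1 h2
  have hdimXY : Module.finrank K (Y : Submodule K L) = Module.finrank K (X : Submodule K L) := by
    let f : (Y : Submodule K L) →ₗ[K] (X : Submodule K L) :=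
      { toFun := fun b => ⟨φ b.1, hφX b.1 b.2⟩
        map_add' := by intro a b; ext; exact hφadd a.1 a.2 b.1 b.2
        map_smul' := by intro k b; ext; exact hφsmul k b.1 b.2 }
    have hfinj : Function.Injective f := by
      intro a b hab
      have : φ a.1 = φ b.1 := congrArg Subtype.val hab
      have h2 : φ (a.1 - b.1) = 0 := by
        have hs : a.1 - b.1 ∈ Y := Y.sub_mem a.2 b.2
        have h3 := hφadd (a.1 - b.1) hs b.1 b.2
        rw [sub_add_cancel, this] at h3
        exact right_eq_add.mp h3
      have := hφinj (a.1 - b.1) (Y.sub_mem a.2 b.2) h2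
      exact Subtype.ext (sub_eq_zero.mp this)
    have hfsurj : Function.Surjective f := by
      rintro ⟨a, ha⟩
      obtain ⟨b, hb, hfb⟩ := hφsurj a ha
      exact ⟨⟨b, hb⟩, Subtype.ext hfb⟩
    exact (LinearEquiv.ofBijective f ⟨hfinj, hfsurj⟩).finrank_eq
  have hYsup : (Y : Submodule K L) ⊔ LinearMap.ker α = ⊤ := by
    have h1 := Submodule.finrank_sup_add_finrank_inf_eq (X : Submodule K L) (LinearMap.ker α)
    have h2 := Submodule.finrank_sup_add_finrank_inf_eq (Y : Submodule K L) (LinearMap.ker α)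
    rw [hXsup, hXinf] at h1
    rw [hYinf] at h2
    simp only [finrank_bot, add_zero, finrank_top] at h1 h2
    apply Submodule.eq_top_of_finrank_eq
    rw [h2, hdimXY, ← h1]
  have hYdec : ∀ z : L, ∃ b ∈ Y, ∃ u ∈ U, z = b + u := by
    intro z
    have : z ∈ (Y : Submodule K L) ⊔ LinearMap.ker α := by rw [hYsup]; trivial
    obtain ⟨b, hb, u, hu, hz⟩ := Submodule.mem_sup.mp this
    exact ⟨b, hb, u, (hUmem u).mpr hu, hz.symm⟩
  have hYUzero : ∀ z : L, z ∈ Y → z ∈ U → z = 0 := fun z hz hu => hYU z hz ((hUmem z).mp hu)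
  -- core-free
  have hcorefree : ∀ C : LieIdeal K L, (C : Set L) ⊆ (U : Set L) → C = ⊥ := by
    intro C hCU
    rcases hXmin.2 (C ⊓ X) inf_le_right with h | h
    · rw [LieSubmodule.eq_bot_iff]
      intro c hc
      have hcY : c ∈ Y := by
        apply hmemY
        intro a ha
        have h1 : ⁅c, a⁆ ∈ C := by
          rw [← lie_skew]; exact C.neg_mem (C.lie_mem hc)
        have h2 : ⁅c, a⁆ ∈ X := X.lie_mem ha
        have : ⁅c, a⁆ ∈ C ⊓ X := ⟨h1, h2⟩
        rw [h] at this
        exact this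
      exact hYUzero c hcY (hCU hc)
    · exfalso
      obtain ⟨a, ha, hane⟩ := hXexists
      have haC : a ∈ C := by
        have : a ∈ C ⊓ X := by rw [h]; exact ha
        exact this.1
      exact hane (hXUzero a ha (hCU haC))
  -- maximality
  have hUneTop : U ≠ ⊤ := by
    intro h
    obtain ⟨a, ha, hane⟩ := hXexists
    have : a ∈ U := by rw [h]; trivial
    exact hane (hXUzero a ha this)
  have hmax : ∀ S : LieSubalgebra K L, U ≤ S → S = U ∨ S = ⊤ := by
    intro S hUS
    set W : LieIdeal K L :=
      { (X : Submodule K L) ⊓ S.toSubmodule with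
        lie_mem := by
          intro x m hm
          have hm' : m ∈ (X : Submodule K L) ⊓ S.toSubmodule := hm
          rw [Submodule.mem_inf] at hm'
          obtain ⟨hmX, hmS⟩ := hm'
          show ⁅x, m⁆ ∈ (X : Submodule K L) ⊓ S.toSubmodule
          rw [Submodule.mem_inf]
          obtain ⟨b, hb, u, hu, hx⟩ := hYdec x
          refine ⟨X.lie_mem hmX, ?_⟩
          have : ⁅x, m⁆ = ⁅b, m⁆ + ⁅u, m⁆ := by rw [hx, add_lie]
          rw [this, hYXlie b hb m hmX, zero_add]
          exact S.lie_mem (hUS hu) hmS } with hWdef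
    have hWmem : ∀ z : L, z ∈ W ↔ z ∈ X ∧ z ∈ S := fun z => ⟨fun h => ⟨h.1, h.2⟩, fun h => ⟨h.1, h.2⟩⟩
    rcases hXmin.2 W (fun z hz => ((hWmem z).mp hz).1) with h | h
    · left
      apply le_antisymm _ hUS
      intro s hs
      obtain ⟨a, ha, u, hu, hsd⟩ := hXdec s
      have haS : a ∈ S := by
        have : a = s - u := by rw [hsd]; abel
        rw [this]
        exact S.sub_mem hs (hUS hu)
      have : a ∈ W := (hWmem a).mpr ⟨ha, haS⟩
      rw [h] at this
      have ha0 : a = 0 := this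
      rw [hsd, ha0, zero_add]
      exact hu
    · right
      rw [eq_top_iff]
      rintro z -
      obtain ⟨a, ha, u, hu, hz⟩ := hXdec z
      have haS : a ∈ S := by
        have : a ∈ W := by rw [h]; exact ha
        exact ((hWmem a).mp this).2
      rw [hz]
      exact S.add_mem haS (hUS hu)
  -- minimal ideals
  have hminideals : ∀ J : LieIdeal K L, J ≠ ⊥ →
      (∀ C : LieIdeal K L, C ≤ J → C = ⊥ ∨ C = J) → J = X ∨ J = Y := by
    intro J hJne hJmin
    rcases hXmin.2 (J ⊓ X) inf_le_right with h | h
    · right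
      have hJY : J ≤ Y := by
        intro j hj
        apply hmemY
        intro a ha
        have h1 : ⁅j, a⁆ ∈ J := by rw [← lie_skew]; exact J.neg_mem (J.lie_mem hj)
        have h2 : ⁅j, a⁆ ∈ X := X.lie_mem ha
        have : ⁅j, a⁆ ∈ J ⊓ X := ⟨h1, h2⟩
        rw [h] at this
        exact this
      rcases hYmin.2 J hJY with h' | h'
      · exact absurd h' hJne
      · exact h'
    · left
      have hXJ : X ≤ J := by
        intro a ha
        have : a ∈ J ⊓ X := by rw [h]; exact ha
        exact this.1
      rcases hJmin X hXJ with h' | h'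
      · exact absurd h' hXmin.1
      · exact h'.symm
  exact ⟨U, rfl, hXdec, hXUzero, hYdec, hYUzero, hcorefree, ⟨hUneTop, hmax⟩, hminideals,
    hXnonab, hYnonab⟩
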